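/- Let ρ be a congruence on the monoid M presented by ⟨x, y, e | e³ = e, xey = y, xe²y = x, xy = 1⟩. If x ρ 1, then ρ is the universal congruence M × M. -/

import Mathlib

/-- The alphabet `A = {x, y, e}`. -/
inductive Alpha : Type
  | x | y | e
  deriving DecidableEq

/-- The defining relations `e³ = e`, `xey = y`, `xe²y = x`, `xy = 1`. -/
def rel : FreeMonoid Alpha → FreeMonoid Alpha → Prop := fun a b =>
  (a = .of .e * .of .e * .of .e ∧ b = .of .e) ∨
  (a = .of .x * .of .e * .of .y ∧ b = .of .y) ∨
  (a = .of .x * .of .e * .of .e * .of .y ∧ b = .of .x) ∨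
  (a = .of .x * .of .y ∧ b = 1)

/-- The monoid `M = ⟨x, y, e | e³ = e, xey = y, xe²y = x, xy = 1⟩`. -/
abbrev M := PresentedMonoid rel

/-- The image of `x` in `M`. -/
def X : M := PresentedMonoid.of rel .x
/-- The image of `y` in `M`. -/
def Y : M := PresentedMonoid.of rel .y
/-- The image of `e` in `M`. -/
def E : M := PresentedMonoid.of rel .e

lemma rel_xy : X * Y = 1 :=
  Quot.sound (ConGen.Rel.of _ _ (Or.inr (Or.inr (Or.inr ⟨rfl, rfl⟩))))

lemma rel_xey : X * E * Y = Y :=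
  Quot.sound (ConGen.Rel.of _ _ (Or.inr (Or.inl ⟨rfl, rfl⟩)))

lemma rel_xeey : X * E * E * Y = X :=
  Quot.sound (ConGen.Rel.of _ _ (Or.inr (Or.inr (Or.inl ⟨rfl, rfl⟩))))

/-- If a congruence on `M` relates `x` and `1`, it is universal. -/
theorem stmt_14 : ∀ ρ : Con M, ρ X 1 → ρ = ⊤ := by
  intro ρ hX
  -- ρ Y 1
  have hY : ρ Y 1 := by
    have := ρ.mul hX (ρ.refl Y)
    rw [rel_xy, one_mul] at this
    exact ρ.symm this
  -- ρ (E * Y) 1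
  have hEY : ρ (E * Y) 1 := by
    have := ρ.mul hX (ρ.refl (E * Y))
    rw [← mul_assoc, rel_xey, one_mul] at this
    exact ρ.trans (ρ.symm this) hY
  -- ρ E 1
  have hE : ρ E 1 := by
    have h1 := ρ.mul hX (ρ.refl (E * (E * Y)))
    rw [← mul_assoc, ← mul_assoc, rel_xeey, one_mul] at h1
    have h2 := ρ.mul (ρ.refl E) hEY
    rw [mul_one] at h2
    exact ρ.trans (ρ.symm h2) (ρ.trans (ρ.symm h1) hX)
  -- every element is related to 1
  have key : ∀ a : M, ρ a 1 := by
    intro a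
    induction a using PresentedMonoid.inductionOn with
    | h w =>
      induction w using FreeMonoid.inductionOn' with
      | one => exact ρ.refl 1
      | of_mul c w ih =>
        have hc : ρ (PresentedMonoid.mk rel (FreeMonoid.of c)) 1 := by
          cases c
          · exact hX
          · exact hY
          · exact hE
        have := ρ.mul hc ih
        rw [one_mul] at this
        exact this
  rw [eq_top_iff]
  intro a b _
  exact ρ.trans (key a) (ρ.symm (key b))
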